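/- arXiv:2512.21241 — 2 statements merged into one kernel-verified Lean document; each statement's English description precedes it below -/
import Mathlib

section
/- Let v be a random vector in R^d with v ≠ 0 almost surely, and suppose the distribution of v is invariant under every orthogonal transformation fixing a given nonzero vector g (i.e., for any orthogonal Q with Qg = g, Qv has the same distribution as v). Then E[(gᵀv̄)·v̄] = E[(ḡᵀv̄)²] · g, where v̄ = v/‖v‖ and ḡ = g/‖g‖. -/
open MeasureTheory

/-- If the law of a (a.s. nonzero) random vector `v` in `ℝ^d` is invariant under every
orthogonal transformation fixing a given nonzero vector `g`, then
`E[(gᵀv̄)·v̄] = E[(ḡᵀv̄)²] · g`, where `v̄ = v/‖v‖` and `ḡ = g/‖g‖`. -/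
theorem projection_estimator_proportional {d : ℕ} (g : EuclideanSpace ℝ (Fin d)) (hg : g ≠ 0)
    (μ : Measure (EuclideanSpace ℝ (Fin d))) [IsProbabilityMeasure μ]
    (hne : ∀ᵐ v ∂μ, v ≠ 0)
    (hinv : ∀ Q : EuclideanSpace ℝ (Fin d) ≃ₗᵢ[ℝ] EuclideanSpace ℝ (Fin d),
      Q g = g → μ.map Q = μ) :
    ∫ v, (inner ℝ g (‖v‖⁻¹ • v) : ℝ) • (‖v‖⁻¹ • v) ∂μ
      = (∫ v, (inner ℝ (‖g‖⁻¹ • g) (‖v‖⁻¹ • v) : ℝ) ^ 2 ∂μ) • g := by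
  have hgn : ‖g‖ ≠ 0 := norm_ne_zero_iff.mpr hg
  set K : Submodule ℝ (EuclideanSpace ℝ (Fin d)) := ℝ ∙ g with hK
  set Q : EuclideanSpace ℝ (Fin d) ≃ₗᵢ[ℝ] EuclideanSpace ℝ (Fin d) := K.reflection with hQ
  have hQg : Q g = g :=
    Submodule.reflection_mem_subspace_eq_self (Submodule.mem_span_singleton_self g)
  have hmap : μ.map Q = μ := hinv Q hQg
  set f : EuclideanSpace ℝ (Fin d) → EuclideanSpace ℝ (Fin d) :=
    fun v => (inner ℝ g (‖v‖⁻¹ • v) : ℝ) • (‖v‖⁻¹ • v) with hf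
  set c : EuclideanSpace ℝ (Fin d) → ℝ :=
    fun v => (inner ℝ (‖g‖⁻¹ • g) (‖v‖⁻¹ • v) : ℝ) ^ 2 with hc
  -- normalized vector has norm ≤ 1
  have hnb : ∀ v : EuclideanSpace ℝ (Fin d), ‖(‖v‖⁻¹ • v : EuclideanSpace ℝ (Fin d))‖ ≤ 1 := by
    intro v
    rcases eq_or_ne v 0 with rfl | hv
    · simp
    · rw [norm_smul, norm_inv, norm_norm, inv_mul_cancel₀ (norm_ne_zero_iff.mpr hv)]
  -- measurability of f
  have hmeas : Measurable f := by
    have h1 : Measurable fun v : EuclideanSpace ℝ (Fin d) =>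
        (‖v‖⁻¹ • v : EuclideanSpace ℝ (Fin d)) :=
      (measurable_norm.inv).smul measurable_id
    exact ((Continuous.measurable (continuous_const.inner (𝕜 := ℝ) continuous_id)).comp h1).smul h1
  have hfi : Integrable f μ := by
    refine (integrable_const ‖g‖).mono' hmeas.aestronglyMeasurable ?_
    filter_upwards with v
    set w : EuclideanSpace ℝ (Fin d) := (‖v‖⁻¹ • v : EuclideanSpace ℝ (Fin d)) with hw
    have h1 : ‖f v‖ = |(inner ℝ g w : ℝ)| * ‖w‖ := by
      rw [hf]; rw [norm_smul, Real.norm_eq_abs]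
    rw [h1]
    calc |(inner ℝ g w : ℝ)| * ‖w‖
        ≤ (‖g‖ * ‖w‖) * 1 := by
          refine mul_le_mul (abs_real_inner_le_norm _ _) (hnb v) (norm_nonneg _) ?_
          positivity
      _ ≤ ‖g‖ * 1 * 1 := by
          refine mul_le_mul_of_nonneg_right ?_ zero_le_one
          exact mul_le_mul_of_nonneg_left (hnb v) (norm_nonneg _)
      _ = ‖g‖ := by ring
  -- change of variables
  have hmp : MeasurePreserving Q μ μ := ⟨Q.continuous.measurable, hmap⟩
  have key : ∫ v, f v ∂μ = ∫ v, f (Q v) ∂μ := by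
    conv_lhs => rw [← hmap]
    exact integral_map_equiv Q.toHomeomorph.toMeasurableEquiv f
  -- pointwise identity
  have hpt : ∀ v : EuclideanSpace ℝ (Fin d), f v + f (Q v) = (2 * c v) • g := by
    intro v
    have hnQ : ‖Q v‖ = ‖v‖ := Q.norm_map v
    have hsm : (‖Q v‖⁻¹ • Q v : EuclideanSpace ℝ (Fin d)) = Q (‖v‖⁻¹ • v) := by
      rw [hnQ, Q.map_smul]
    set w : EuclideanSpace ℝ (Fin d) := (‖v‖⁻¹ • v : EuclideanSpace ℝ (Fin d)) with hw
    have hinner : (inner ℝ g (Q w) : ℝ) = inner ℝ g w := by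
      have h := Q.inner_map_map g (Q w)
      rw [hQg] at h
      rw [← h, hQ, Submodule.reflection_reflection]
    have hsum : w + Q w = (2 * ((inner ℝ g w : ℝ) / ‖g‖ ^ 2)) • g := by
      have hr : Q w = 2 • ((K.starProjection w : EuclideanSpace ℝ (Fin d))) - w :=
        Submodule.reflection_apply w
      have hproj : ((K.starProjection w : EuclideanSpace ℝ (Fin d)))
          = ((inner ℝ g w : ℝ) / ((‖g‖ : ℝ) ^ 2)) • g := Submodule.starProjection_singleton ℝ w
      rw [hr, hproj, two_smul, two_mul, add_smul]
      abel
    have hcv : c v = ((inner ℝ g w : ℝ))^2 / ‖g‖ ^ 2 := by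
      rw [hc]
      simp only [← hw, real_inner_smul_left]
      field_simp
    rw [hf]
    simp only [hsm, hinner, ← hw]
    rw [← smul_add, hsum, smul_smul, hcv]
    congr 1
    field_simp
  -- integrability of f ∘ Q
  have hfQi : Integrable (fun v => f (Q v)) μ :=
    (hmp.integrable_comp hmeas.aestronglyMeasurable).mpr hfi
  -- combine
  have hsum_int : ∫ v, (f v + f (Q v)) ∂μ = (2 * ∫ v, c v ∂μ) • g := by
    have h : ∫ v, (f v + f (Q v)) ∂μ = ∫ v, (2 * c v) • g ∂μ := by
      congr 1; funext v; exact hpt v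
    rw [h, integral_smul_const, integral_const_mul]
  have h2 : (2 : ℝ) • (∫ v, f v ∂μ) = ((2 : ℝ) * ∫ v, c v ∂μ) • g := by
    rw [two_smul]
    nth_rewrite 2 [key]
    rw [← integral_add hfi hfQi, hsum_int]
  have h2' : (2 : ℝ) • (∫ v, f v ∂μ) = (2 : ℝ) • ((∫ v, c v ∂μ) • g) := by
    rw [h2, smul_smul]
  exact smul_right_injective (EuclideanSpace ℝ (Fin d)) (two_ne_zero (α := ℝ)) h2'
end

section
/- Let g ∈ R^d be nonzero, p₁, …, p_s an orthonormal set, and suppose v̄ is a random unit vector orthogonal to all pᵢ almost surely, whose conditional distribution is rotationally symmetric about the projection of g onto the orthogonal complement W of span{p₁,…,p_s}. Write g = g_P + g_W where g_P is the projection onto span{p₁,…,p_s}. If c := E[(ḡ_Wᵀ v̄)²] (when g_W ≠ 0), then E[(1/c)(gᵀv̄)v̄ + Σᵢ (gᵀpᵢ)pᵢ] = g. -/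
open MeasureTheory

section Aux

variable {d : ℕ}

local notation "E" => EuclideanSpace ℝ (Fin d)

/-- Integrability of bounded-times-unit-vector integrands. -/
lemma pars_aux_int_vec (μ : Measure E) [IsProbabilityMeasure μ]
    (hnorm : ∀ᵐ v ∂μ, ‖v‖ = 1) (w : E) :
    Integrable (fun v : E => (inner ℝ w v : ℝ) • v) μ := by
  refine Integrable.mono' (integrable_const ‖w‖)
    ((show Continuous fun v : E => (inner ℝ w v : ℝ) • v by fun_prop).aestronglyMeasurable) ?_
  filter_upwards [hnorm] with v hv
  rw [norm_smul, hv, mul_one]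
  calc ‖(inner ℝ w v : ℝ)‖ ≤ ‖w‖ * ‖v‖ := norm_inner_le_norm w v
    _ = ‖w‖ := by rw [hv, mul_one]

lemma pars_aux_int_scal (μ : Measure E) [IsProbabilityMeasure μ]
    (hnorm : ∀ᵐ v ∂μ, ‖v‖ = 1) (w u : E) :
    Integrable (fun v : E => (inner ℝ w v : ℝ) * (inner ℝ u v : ℝ)) μ := by
  refine Integrable.mono' (integrable_const (‖w‖ * ‖u‖))
    ((Continuous.mul (continuous_const.inner continuous_id)
      (continuous_const.inner continuous_id)).aestronglyMeasurable) ?_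
  filter_upwards [hnorm] with v hv
  rw [norm_mul]
  have h1 : ‖(inner ℝ w v : ℝ)‖ ≤ ‖w‖ := by
    calc ‖(inner ℝ w v : ℝ)‖ ≤ ‖w‖ * ‖v‖ := norm_inner_le_norm w v
      _ = ‖w‖ := by rw [hv, mul_one]
  have h2 : ‖(inner ℝ u v : ℝ)‖ ≤ ‖u‖ := by
    calc ‖(inner ℝ u v : ℝ)‖ ≤ ‖u‖ * ‖v‖ := norm_inner_le_norm u v
      _ = ‖u‖ := by rw [hv, mul_one]
  exact mul_le_mul h1 h2 (norm_nonneg _) (norm_nonneg _)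

end Aux

/-- Unbiasedness structure of the PARS-OPT estimator: if `v̄` is a random unit vector
(with law `μ`) orthogonal to the orthonormal priors `pᵢ` a.s., whose law is rotationally
symmetric about the projection `g_W` of `g` on the orthogonal complement of the priors, and
`c = E[(ḡ_Wᵀv̄)²] ≠ 0`, then `E[(1/c)(gᵀv̄)v̄ + Σᵢ(gᵀpᵢ)pᵢ] = g`. -/
theorem pars_estimator_unbiased {d s : ℕ}
    (g : EuclideanSpace ℝ (Fin d)) (hg : g ≠ 0)
    (p : Fin s → EuclideanSpace ℝ (Fin d)) (hp : Orthonormal ℝ p)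
    (μ : Measure (EuclideanSpace ℝ (Fin d))) [IsProbabilityMeasure μ]
    (has : ∀ᵐ v ∂μ, ‖v‖ = 1 ∧ ∀ i, (inner ℝ (p i) v : ℝ) = 0)
    (gP gW : EuclideanSpace ℝ (Fin d))
    (hgP : gP = ∑ i, (inner ℝ g (p i) : ℝ) • p i) (hgW : gW = g - gP) (hgW0 : gW ≠ 0)
    (hinv : ∀ Q : EuclideanSpace ℝ (Fin d) ≃ₗᵢ[ℝ] EuclideanSpace ℝ (Fin d),
      Q gW = gW → (∀ i, Q (p i) = p i) → μ.map Q = μ)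
    (c : ℝ) (hc : c = ∫ v, (inner ℝ (‖gW‖⁻¹ • gW) v : ℝ) ^ 2 ∂μ) (hc0 : c ≠ 0) :
    (∫ v, ((1 / c) * (inner ℝ g v : ℝ)) • v ∂μ) + ∑ i, (inner ℝ g (p i) : ℝ) • p i = g := by
  classical
  have hnorm : ∀ᵐ v ∂μ, ‖v‖ = 1 := has.mono fun v h => h.1
  have hperp : ∀ᵐ v ∂μ, ∀ i, (inner ℝ (p i) v : ℝ) = 0 := has.mono fun v h => h.2
  have hgsum : g = gW + gP := by rw [hgW]; abel
  -- a.e., ⟪g, v⟫ = ⟪gW, v⟫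
  have hgv : ∀ᵐ v ∂μ, (inner ℝ g v : ℝ) = (inner ℝ gW v : ℝ) := by
    filter_upwards [hperp] with v hv
    have hgPv : (inner ℝ gP v : ℝ) = 0 := by
      rw [hgP, sum_inner]
      refine Finset.sum_eq_zero fun i _ => ?_
      rw [real_inner_smul_left, hv i, mul_zero]
    rw [hgsum, inner_add_left, hgPv, add_zero]
  -- gW is orthogonal to each p i
  have hgWp : ∀ i, (inner ℝ gW (p i) : ℝ) = 0 := by
    intro i
    have hgPp : (inner ℝ gP (p i) : ℝ) = (inner ℝ g (p i) : ℝ) := by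
      rw [hgP, sum_inner]
      simp_rw [real_inner_smul_left, orthonormal_iff_ite.mp hp]
      simp
    rw [hgW, inner_sub_left, hgPp, sub_self]
  set m : EuclideanSpace ℝ (Fin d) := ∫ v, (inner ℝ g v : ℝ) • v ∂μ with hm
  have hintg := pars_aux_int_vec μ hnorm g
  -- components of m
  have hcomp : ∀ w : EuclideanSpace ℝ (Fin d),
      (inner ℝ w m : ℝ) = ∫ v, (inner ℝ g v : ℝ) * (inner ℝ w v : ℝ) ∂μ := by
    intro w
    have h := (innerSL ℝ w).integral_comp_comm hintg
    simp only [innerSL_apply_apply] at h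
    rw [hm, ← h]
    apply integral_congr_ae
    filter_upwards with v
    rw [real_inner_smul_right, mul_comm]
  -- key symmetry lemma
  have key : ∀ u : EuclideanSpace ℝ (Fin d), (inner ℝ u gW : ℝ) = 0 →
      (∀ i, (inner ℝ u (p i) : ℝ) = 0) →
      ∫ v, (inner ℝ g v : ℝ) * (inner ℝ u v : ℝ) ∂μ = 0 := by
    intro u hugW hup
    rcases eq_or_ne u 0 with rfl | hu
    · simp
    set K : Submodule ℝ (EuclideanSpace ℝ (Fin d)) := (ℝ ∙ u)ᗮ with hK
    set Q : EuclideanSpace ℝ (Fin d) ≃ₗᵢ[ℝ] EuclideanSpace ℝ (Fin d) := K.reflection with hQ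
    have hgWK : gW ∈ K :=
      Submodule.mem_orthogonal_singleton_iff_inner_right.mpr hugW
    have hpK : ∀ i, p i ∈ K := fun i =>
      Submodule.mem_orthogonal_singleton_iff_inner_right.mpr (hup i)
    have hQgW : Q gW = gW := Submodule.reflection_mem_subspace_eq_self hgWK
    have hQp : ∀ i, Q (p i) = p i := fun i => Submodule.reflection_mem_subspace_eq_self (hpK i)
    have hQu : Q u = -u := by
      have hu' : u ∈ Kᗮ := by
        rw [hK, Submodule.orthogonal_orthogonal]
        exact Submodule.mem_span_singleton_self u
      exact Submodule.reflection_mem_subspace_orthogonalComplement_eq_neg hu'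
    have hQg : Q g = g := by
      rw [hgsum, map_add, hQgW, hgP, map_sum]
      rw [Finset.sum_congr rfl fun i _ => by rw [LinearIsometryEquiv.map_smul, hQp i]]
    have hmap := hinv Q hQgW hQp
    have hmeas : AEStronglyMeasurable
        (fun v => (inner ℝ g v : ℝ) * (inner ℝ u v : ℝ)) (μ.map Q) := by
      rw [hmap]
      exact (pars_aux_int_scal μ hnorm g u).aestronglyMeasurable
    have hchg : ∫ v, (inner ℝ g v : ℝ) * (inner ℝ u v : ℝ) ∂μ
        = ∫ v, (inner ℝ g (Q v) : ℝ) * (inner ℝ u (Q v) : ℝ) ∂μ := by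
      conv_lhs => rw [← hmap]
      exact integral_map (Q.continuous.measurable.aemeasurable) hmeas
    have hptw : ∀ v : EuclideanSpace ℝ (Fin d), (inner ℝ g (Q v) : ℝ) * (inner ℝ u (Q v) : ℝ)
        = -((inner ℝ g v : ℝ) * (inner ℝ u v : ℝ)) := by
      intro v
      have h1 : (inner ℝ g (Q v) : ℝ) = (inner ℝ g v : ℝ) := by
        conv_lhs => rw [← hQg]
        exact Q.inner_map_map g v
      have h2 : (inner ℝ u (Q v) : ℝ) = -(inner ℝ u v : ℝ) := by
        have h3 := Q.inner_map_map u v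
        rw [hQu, inner_neg_left] at h3
        have h4 : (inner ℝ (Q u) (Q v) : ℝ) = (inner ℝ u v : ℝ) := Q.inner_map_map u v
        rw [hQu, inner_neg_left] at h4
        linarith [h4]
      rw [h1, h2]; ring
    have hI : ∫ v, (inner ℝ g v : ℝ) * (inner ℝ u v : ℝ) ∂μ
        = -∫ v, (inner ℝ g v : ℝ) * (inner ℝ u v : ℝ) ∂μ := by
      conv_lhs => rw [hchg]
      simp_rw [hptw]
      exact integral_neg _
    linarith
  -- inner (p i) m = 0
  have hpm : ∀ i, (inner ℝ (p i) m : ℝ) = 0 := by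
    intro i
    rw [hcomp]
    have hz : ∫ v, (inner ℝ g v : ℝ) * (inner ℝ (p i) v : ℝ) ∂μ = ∫ _v, (0 : ℝ) ∂μ := by
      apply integral_congr_ae
      filter_upwards [hperp] with v hv
      rw [hv i, mul_zero]
    rw [hz, integral_zero]
  -- inner gW m = ‖gW‖² c
  have hgWm : (inner ℝ gW m : ℝ) = ‖gW‖ ^ 2 * c := by
    rw [hcomp]
    have h1 : ∫ v, (inner ℝ g v : ℝ) * (inner ℝ gW v : ℝ) ∂μ
        = ∫ v, (inner ℝ gW v : ℝ) ^ 2 ∂μ := by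
      apply integral_congr_ae
      filter_upwards [hgv] with v hv
      rw [hv]; ring
    have h2 : ∀ v : EuclideanSpace ℝ (Fin d),
        (inner ℝ ((‖gW‖⁻¹ : ℝ) • gW) v : ℝ) ^ 2 = ‖gW‖⁻¹ ^ 2 * (inner ℝ gW v : ℝ) ^ 2 := by
      intro v; rw [real_inner_smul_left]; ring
    have hn : ‖gW‖ ≠ 0 := norm_ne_zero_iff.mpr hgW0
    rw [h1, hc]
    simp_rw [h2]
    rw [integral_const_mul, ← mul_assoc]
    field_simp
  -- m = c • gW
  have hmeq : m = c • gW := by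
    have hgWm' : (inner ℝ m gW : ℝ) = ‖gW‖ ^ 2 * c := by
      rw [real_inner_comm]; exact hgWm
    have hpm' : ∀ i, (inner ℝ m (p i) : ℝ) = 0 := fun i => by
      rw [real_inner_comm]; exact hpm i
    have hwgW : (inner ℝ (m - c • gW) gW : ℝ) = 0 := by
      rw [inner_sub_left, real_inner_smul_left, hgWm', real_inner_self_eq_norm_sq]
      ring
    have hwp : ∀ i, (inner ℝ (m - c • gW) (p i) : ℝ) = 0 := by
      intro i
      rw [inner_sub_left, real_inner_smul_left, hgWp i, hpm' i]
      ring
    have hwm : (inner ℝ (m - c • gW) m : ℝ) = 0 := (hcomp _).trans (key _ hwgW hwp)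
    have h4 : (inner ℝ (m - c • gW) (m - c • gW) : ℝ) = 0 := by
      rw [inner_sub_right, real_inner_smul_right, hwm, hwgW]
      ring
    exact sub_eq_zero.mp (inner_self_eq_zero.mp h4)
  -- finish
  have hintegral : (∫ v, ((1 / c) * (inner ℝ g v : ℝ)) • v ∂μ) = (1 / c) • m := by
    rw [hm]
    simp_rw [← smul_smul]
    exact integral_smul _ _
  rw [hintegral, hmeq, smul_smul, one_div, inv_mul_cancel₀ hc0, one_smul, ← hgP]
  exact hgsum.symm
end
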